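/- Let γ > 0 and a_n ≥ 0 with a_n ≤ c₂ n^{-γ} for n ≥ 1 and a_0 ≤ c₂. Then there exists K > 0 such that e^{-t} Σ_{n=0}^∞ (t^n/n!) a_n ≤ K t^{-γ} for all t ≥ 1. -/

import Mathlib

lemma expNegBound (c γ : ℝ) (hc : 0 < c) (hγ : 0 < γ) :
    ∃ M : ℝ, 0 < M ∧ ∀ t : ℝ, 1 ≤ t → Real.exp (-(c * t)) ≤ M * t ^ (-γ) := by
  set m := ⌈γ⌉₊ with hm
  refine ⟨(m.factorial : ℝ) / c ^ m, by positivity, fun t ht => ?_⟩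
  have htpos : (0:ℝ) < t := lt_of_lt_of_le one_pos ht
  have hctpos : (0:ℝ) < c * t := by positivity
  have h1 : (c * t) ^ m / (m.factorial : ℝ) ≤ Real.exp (c * t) := by
    calc (c * t) ^ m / (m.factorial : ℝ)
        ≤ ∑ i ∈ Finset.range (m + 1), (c * t) ^ i / (i.factorial : ℝ) :=
          Finset.single_le_sum (f := fun i => (c * t) ^ i / (i.factorial : ℝ))
            (fun i _ => by positivity) (Finset.self_mem_range_succ m)
      _ ≤ Real.exp (c * t) := Real.sum_le_exp_of_nonneg hctpos.le _
  have hpow : (0:ℝ) < (c * t) ^ m / (m.factorial : ℝ) := by positivity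
  have h2 : Real.exp (-(c * t)) ≤ (m.factorial : ℝ) / (c * t) ^ m := by
    rw [Real.exp_neg]
    calc (Real.exp (c * t))⁻¹ ≤ ((c * t) ^ m / (m.factorial : ℝ))⁻¹ :=
          inv_anti₀ hpow h1
      _ = (m.factorial : ℝ) / (c * t) ^ m := by
          rw [inv_div]
  have h3 : t ^ (-(m:ℝ)) ≤ t ^ (-γ) := by
    apply Real.rpow_le_rpow_of_exponent_le ht
    have : γ ≤ (m : ℝ) := Nat.le_ceil γ
    linarith
  calc Real.exp (-(c * t)) ≤ (m.factorial : ℝ) / (c * t) ^ m := h2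
    _ = ((m.factorial : ℝ) / c ^ m) * t ^ (-(m:ℝ)) := by
        rw [Real.rpow_neg htpos.le, Real.rpow_natCast]
        field_simp [mul_pow]
        ring
    _ ≤ ((m.factorial : ℝ) / c ^ m) * t ^ (-γ) := by
        apply mul_le_mul_of_nonneg_left h3 (by positivity)

set_option maxHeartbeats 1000000 in
/-- If `0 ≤ a_n`, `a_0 ≤ c₂` and `a_n ≤ c₂ n^{-γ}` for `n ≥ 1` (`γ > 0`), then there is
`K > 0` with `e^{-t} Σ_n (t^n/n!) a_n ≤ K t^{-γ}` for all `t ≥ 1`. -/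
theorem stmt17 (γ : ℝ) (hγ : 0 < γ) (c₂ : ℝ) (hc₂ : 0 < c₂)
    (a : ℕ → ℝ) (hann : ∀ n, 0 ≤ a n) (ha0 : a 0 ≤ c₂)
    (hup : ∀ n : ℕ, 1 ≤ n → a n ≤ c₂ * (n : ℝ) ^ (-γ)) :
    ∃ K : ℝ, 0 < K ∧ ∀ t : ℝ, 1 ≤ t →
      Real.exp (-t) * ∑' n : ℕ, t ^ n / (n.factorial : ℝ) * a n ≤ K * t ^ (-γ) := by
  have hlog2 : Real.log 2 < 1 := by
    have := Real.log_lt_sub_one_of_pos (by norm_num : (0:ℝ) < 2) (by norm_num)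
    linarith
  obtain ⟨M, hM, hMb⟩ := expNegBound ((1 - Real.log 2) / 2) γ (by linarith) hγ
  refine ⟨c₂ * 2 ^ γ + 2 * c₂ * M, by positivity, fun t ht => ?_⟩
  have htpos : (0:ℝ) < t := lt_of_lt_of_le one_pos ht
  set N := ⌈t / 2⌉₊ with hN
  have hNt : t / 2 ≤ (N : ℝ) := Nat.le_ceil _
  have hNle : (N : ℝ) ≤ t / 2 + 1 := by
    have := Nat.ceil_lt_add_one (by linarith : (0:ℝ) ≤ t / 2)
    linarith
  -- every a n ≤ c₂
  have habd : ∀ n, a n ≤ c₂ := by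
    intro n
    rcases Nat.eq_zero_or_pos n with h | h
    · rw [h]; exact ha0
    · refine (hup n h).trans ?_
      have h1 : ((n : ℝ)) ^ (-γ) ≤ 1 :=
        Real.rpow_le_one_of_one_le_of_nonpos (by exact_mod_cast h) (by linarith)
      calc c₂ * (n : ℝ) ^ (-γ) ≤ c₂ * 1 := by
            apply mul_le_mul_of_nonneg_left h1 hc₂.le
        _ = c₂ := mul_one _
  have hgsum : Summable (fun n : ℕ => t ^ n / (n.factorial : ℝ)) :=
    Real.summable_pow_div_factorial t
  have hgnn : ∀ n : ℕ, 0 ≤ t ^ n / (n.factorial : ℝ) := fun n => by positivity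
  have hfnn : ∀ n : ℕ, 0 ≤ t ^ n / (n.factorial : ℝ) * a n :=
    fun n => mul_nonneg (hgnn n) (hann n)
  have hsum : Summable (fun n : ℕ => t ^ n / (n.factorial : ℝ) * a n) := by
    apply Summable.of_nonneg_of_le hfnn (fun n => ?_) (hgsum.mul_right c₂)
    exact mul_le_mul_of_nonneg_left (habd n) (hgnn n)
  have hexp : (∑' n : ℕ, t ^ n / (n.factorial : ℝ)) = Real.exp t := by
    rw [Real.exp_eq_exp_ℝ, NormedSpace.exp_eq_tsum_div]
  -- tail of exp series ≤ exp t
  have htail_exp : (∑' n : ℕ, t ^ (n + N) / ((n + N).factorial : ℝ)) ≤ Real.exp t := by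
    have hsplit := Summable.sum_add_tsum_nat_add (f := fun n : ℕ => t ^ n / (n.factorial : ℝ)) N hgsum
    have hhead : 0 ≤ ∑ i ∈ Finset.range N, t ^ i / (i.factorial : ℝ) :=
      Finset.sum_nonneg fun i _ => hgnn i
    rw [hexp] at hsplit
    linarith
  have hgsum_tail : Summable (fun n : ℕ => t ^ (n + N) / ((n + N).factorial : ℝ)) :=
    (summable_nat_add_iff N).mpr hgsum
  have hfsum_tail : Summable (fun n : ℕ => t ^ (n + N) / ((n + N).factorial : ℝ) * a (n + N)) :=
    (summable_nat_add_iff N).mpr hsum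
  -- (t/2)^(-γ) = 2^γ * t^(-γ)
  have hhalf : (t / 2) ^ (-γ) = 2 ^ γ * t ^ (-γ) := by
    rw [Real.div_rpow htpos.le (by norm_num), Real.rpow_neg (by norm_num : (0:ℝ) ≤ 2)]
    field_simp
  -- tail bound
  have hNpos : 0 < N := Nat.ceil_pos.mpr (by linarith)
  have htail : (∑' n : ℕ, t ^ (n + N) / ((n + N).factorial : ℝ) * a (n + N))
      ≤ c₂ * 2 ^ γ * t ^ (-γ) * Real.exp t := by
    have hterm : ∀ n : ℕ, t ^ (n + N) / ((n + N).factorial : ℝ) * a (n + N)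
        ≤ (c₂ * 2 ^ γ * t ^ (-γ)) * (t ^ (n + N) / ((n + N).factorial : ℝ)) := by
      intro n
      have h1 : 1 ≤ n + N := le_add_of_le_right hNpos
      have h2 : a (n + N) ≤ c₂ * ((n + N : ℕ) : ℝ) ^ (-γ) := hup _ h1
      have h3 : ((n + N : ℕ) : ℝ) ^ (-γ) ≤ (t / 2) ^ (-γ) := by
        apply Real.rpow_le_rpow_of_nonpos (by linarith) ?_ (by linarith)
        push_cast
        have : (N : ℝ) ≤ (n : ℝ) + N := by
          have : (0:ℝ) ≤ (n:ℝ) := Nat.cast_nonneg n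
          linarith
        linarith
      have h4 : a (n + N) ≤ c₂ * 2 ^ γ * t ^ (-γ) := by
        calc a (n + N) ≤ c₂ * ((n + N : ℕ) : ℝ) ^ (-γ) := h2
          _ ≤ c₂ * (t / 2) ^ (-γ) := mul_le_mul_of_nonneg_left h3 hc₂.le
          _ = c₂ * 2 ^ γ * t ^ (-γ) := by rw [hhalf]; ring
      calc t ^ (n + N) / ((n + N).factorial : ℝ) * a (n + N)
          ≤ t ^ (n + N) / ((n + N).factorial : ℝ) * (c₂ * 2 ^ γ * t ^ (-γ)) :=
            mul_le_mul_of_nonneg_left h4 (hgnn (n + N))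
        _ = (c₂ * 2 ^ γ * t ^ (-γ)) * (t ^ (n + N) / ((n + N).factorial : ℝ)) := by ring
    calc (∑' n : ℕ, t ^ (n + N) / ((n + N).factorial : ℝ) * a (n + N))
        ≤ ∑' n : ℕ, (c₂ * 2 ^ γ * t ^ (-γ)) * (t ^ (n + N) / ((n + N).factorial : ℝ)) :=
          Summable.tsum_le_tsum hterm hfsum_tail (hgsum_tail.mul_left _)
      _ = (c₂ * 2 ^ γ * t ^ (-γ)) * ∑' n : ℕ, t ^ (n + N) / ((n + N).factorial : ℝ) :=
          tsum_mul_left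
      _ ≤ c₂ * 2 ^ γ * t ^ (-γ) * Real.exp t := by
          apply mul_le_mul_of_nonneg_left htail_exp (by positivity)
  -- head bound
  have hhead : (∑ i ∈ Finset.range N, t ^ i / (i.factorial : ℝ) * a i)
      ≤ c₂ * (2:ℝ) ^ (N:ℝ) * Real.exp (t / 2) := by
    have hterm : ∀ i ∈ Finset.range N, t ^ i / (i.factorial : ℝ) * a i
        ≤ c₂ * (2:ℝ) ^ (N:ℝ) * ((t / 2) ^ i / (i.factorial : ℝ)) := by
      intro i hi
      rw [Finset.mem_range] at hi
      have h1 : t ^ i = 2 ^ i * (t / 2) ^ i := by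
        rw [← mul_pow]; ring_nf
      have h2 : (2:ℝ) ^ i ≤ (2:ℝ) ^ (N:ℝ) := by
        rw [← Real.rpow_natCast 2 i]
        exact Real.rpow_le_rpow_of_exponent_le one_le_two (by exact_mod_cast hi.le)
      calc t ^ i / (i.factorial : ℝ) * a i
          ≤ t ^ i / (i.factorial : ℝ) * c₂ :=
            mul_le_mul_of_nonneg_left (habd i) (hgnn i)
        _ = c₂ * ((2:ℝ) ^ i * ((t / 2) ^ i / (i.factorial : ℝ))) := by
            rw [h1]; ring
        _ ≤ c₂ * ((2:ℝ) ^ (N:ℝ) * ((t / 2) ^ i / (i.factorial : ℝ))) := by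
            apply mul_le_mul_of_nonneg_left ?_ hc₂.le
            apply mul_le_mul_of_nonneg_right h2 (by positivity)
        _ = c₂ * (2:ℝ) ^ (N:ℝ) * ((t / 2) ^ i / (i.factorial : ℝ)) := by ring
    calc (∑ i ∈ Finset.range N, t ^ i / (i.factorial : ℝ) * a i)
        ≤ ∑ i ∈ Finset.range N, c₂ * (2:ℝ) ^ (N:ℝ) * ((t / 2) ^ i / (i.factorial : ℝ)) :=
          Finset.sum_le_sum hterm
      _ = c₂ * (2:ℝ) ^ (N:ℝ) * ∑ i ∈ Finset.range N, (t / 2) ^ i / (i.factorial : ℝ) := by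
          rw [Finset.mul_sum]
      _ ≤ c₂ * (2:ℝ) ^ (N:ℝ) * Real.exp (t / 2) := by
          apply mul_le_mul_of_nonneg_left
            (Real.sum_le_exp_of_nonneg (by linarith) N) (by positivity)
  -- 2^N ≤ 2 * 2^(t/2)
  have h2N : (2:ℝ) ^ (N:ℝ) ≤ 2 * (2:ℝ) ^ (t/2 : ℝ) := by
    calc (2:ℝ) ^ (N:ℝ) ≤ (2:ℝ) ^ (t/2 + 1 : ℝ) :=
          Real.rpow_le_rpow_of_exponent_le one_le_two hNle
      _ = 2 * (2:ℝ) ^ (t/2 : ℝ) := by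
          rw [Real.rpow_add (by norm_num), Real.rpow_one]; ring
  -- combine head with exp
  have hheadfinal : Real.exp (-t) * (∑ i ∈ Finset.range N, t ^ i / (i.factorial : ℝ) * a i)
      ≤ 2 * c₂ * M * t ^ (-γ) := by
    have h2t : (2:ℝ) ^ (t/2 : ℝ) = Real.exp (t/2 * Real.log 2) := by
      rw [Real.rpow_def_of_pos (by norm_num)]
      ring_nf
    have hkey : Real.exp (-t) * (c₂ * (2 * (2:ℝ) ^ (t/2:ℝ)) * Real.exp (t / 2))
        = 2 * c₂ * Real.exp (-(((1 - Real.log 2) / 2) * t)) := by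
      have harg : -t + (t / 2 * Real.log 2 + t / 2) = -(((1 - Real.log 2) / 2) * t) := by ring
      calc Real.exp (-t) * (c₂ * (2 * (2:ℝ) ^ (t/2:ℝ)) * Real.exp (t / 2))
          = 2 * c₂ * (Real.exp (-t) * (Real.exp (t / 2 * Real.log 2) * Real.exp (t / 2))) := by
            rw [h2t]; ring
        _ = 2 * c₂ * Real.exp (-t + (t / 2 * Real.log 2 + t / 2)) := by
            rw [← Real.exp_add, ← Real.exp_add]
        _ = 2 * c₂ * Real.exp (-(((1 - Real.log 2) / 2) * t)) := by rw [harg]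
    have hb1 : (∑ i ∈ Finset.range N, t ^ i / (i.factorial : ℝ) * a i)
        ≤ c₂ * (2 * (2:ℝ) ^ (t/2:ℝ)) * Real.exp (t / 2) := by
      refine hhead.trans ?_
      apply mul_le_mul_of_nonneg_right ?_ (Real.exp_nonneg _)
      exact mul_le_mul_of_nonneg_left h2N hc₂.le
    calc Real.exp (-t) * (∑ i ∈ Finset.range N, t ^ i / (i.factorial : ℝ) * a i)
        ≤ Real.exp (-t) * (c₂ * (2 * (2:ℝ) ^ (t/2:ℝ)) * Real.exp (t / 2)) :=
          mul_le_mul_of_nonneg_left hb1 (Real.exp_nonneg _)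
      _ = 2 * c₂ * Real.exp (-(((1 - Real.log 2) / 2) * t)) := hkey
      _ ≤ 2 * c₂ * (M * t ^ (-γ)) := by
          apply mul_le_mul_of_nonneg_left (hMb t ht) (by positivity)
      _ = 2 * c₂ * M * t ^ (-γ) := by ring
  -- combine tail with exp
  have htailfinal : Real.exp (-t) * (∑' n : ℕ, t ^ (n + N) / ((n + N).factorial : ℝ) * a (n + N))
      ≤ c₂ * 2 ^ γ * t ^ (-γ) := by
    calc Real.exp (-t) * (∑' n : ℕ, t ^ (n + N) / ((n + N).factorial : ℝ) * a (n + N))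
        ≤ Real.exp (-t) * (c₂ * 2 ^ γ * t ^ (-γ) * Real.exp t) :=
          mul_le_mul_of_nonneg_left htail (Real.exp_nonneg _)
      _ = c₂ * 2 ^ γ * t ^ (-γ) * (Real.exp (-t) * Real.exp t) := by ring
      _ = c₂ * 2 ^ γ * t ^ (-γ) := by
          rw [← Real.exp_add]; simp
  -- split and conclude
  have hsplit := Summable.sum_add_tsum_nat_add
    (f := fun n : ℕ => t ^ n / (n.factorial : ℝ) * a n) N hsum
  calc Real.exp (-t) * ∑' n : ℕ, t ^ n / (n.factorial : ℝ) * a n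
      = Real.exp (-t) * (∑ i ∈ Finset.range N, t ^ i / (i.factorial : ℝ) * a i)
        + Real.exp (-t) * (∑' n : ℕ, t ^ (n + N) / ((n + N).factorial : ℝ) * a (n + N)) := by
        rw [← hsplit]; ring
    _ ≤ 2 * c₂ * M * t ^ (-γ) + c₂ * 2 ^ γ * t ^ (-γ) := add_le_add hheadfinal htailfinal
    _ = (c₂ * 2 ^ γ + 2 * c₂ * M) * t ^ (-γ) := by ring
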